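/- The example series ∑_{n=0}^∞ a_n diverges: its sequence of partial sums does not converge. (Indeed, the partial sum equals 0 at the end of each block B_k, while within the block B_{j²} the partial sum reaches the value 1 after the j² positive terms; hence the partial sums take the values 0 and 1 each infinitely often.) -/

import Mathlib

open Filter Finset

noncomputable section
open scoped Classical

/-- Partial sum of the series `∑ a n`: sum of the first `n` terms. -/
def partialSum (a : ℕ → ℝ) (n : ℕ) : ℝ := ∑ i ∈ Finset.range n, a i

/-- The series `∑ a n` converges to `L`. -/
def ConvergesTo (a : ℕ → ℝ) (L : ℝ) : Prop :=
  Filter.Tendsto (partialSum a) Filter.atTop (nhds L)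

/-- The series `∑ a n` converges. -/
def Converges (a : ℕ → ℝ) : Prop := ∃ L : ℝ, ConvergesTo a L

/-- The series `∑ a n` is conditionally divergent: it diverges, but some
rearrangement of it converges. -/
def CondDivergent (a : ℕ → ℝ) : Prop :=
  ¬ Converges a ∧ ∃ σ : Equiv.Perm ℕ, Converges (fun n => a (σ n))

/-- `σ` is a type R permutation of the series `∑ a n`: it preserves the relative
order of terms of the same sign. -/
def IsTypeR (a : ℕ → ℝ) (σ : Equiv.Perm ℕ) : Prop :=
  ∀ i j : ℕ, σ i < σ j →
    ((0 < a (σ i) ∧ 0 < a (σ j)) ∨ (a (σ i) ≤ 0 ∧ a (σ j) ≤ 0)) → i < j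

/-- The number of maximal integer intervals whose union is the finite set `s`
(= the number of `x ∈ s` with `x + 1 ∉ s`). -/
def blockCount (s : Finset ℕ) : ℕ := (s.filter (fun x => x + 1 ∉ s)).card

/-- `σ` has bounded block number `C`: at every stage `n`, the set
`σ '' {0, 1, …, n}` is a union of at most `C` maximal integer intervals. -/
def HasBBN (σ : Equiv.Perm ℕ) (C : ℕ) : Prop :=
  ∀ n : ℕ, blockCount ((Finset.range (n + 1)).image σ) ≤ C

/-- `σ` is a type R λ-permutation of the series `∑ a n`: a type R permutation
with bounded block number whose rearranged series converges. -/
def IsTypeRLambda (a : ℕ → ℝ) (σ : Equiv.Perm ℕ) : Prop :=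
  IsTypeR a σ ∧ (∃ C : ℕ, HasBBN σ C) ∧ Converges (fun n => a (σ n))

/-- The set of sums attainable by type R λ-permutations of `∑ a n`. -/
def ZR (a : ℕ → ℝ) : Set ℝ :=
  {r : ℝ | ∃ σ : Equiv.Perm ℕ, IsTypeRLambda a σ ∧ ConvergesTo (fun n => a (σ n)) r}

/-- The first element `p_i` of the `i`-th positive block `P_i` (blocks 1-indexed):
the `i`-th index `n` with `a n > 0` which starts a maximal interval of positive terms. -/
def posStartIdx (a : ℕ → ℝ) (i : ℕ) : ℕ :=
  Nat.nth (fun n => 0 < a n ∧ (n = 0 ∨ a (n - 1) ≤ 0)) (i - 1)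

/-- The last element `q_i` of the `i`-th positive block `P_i` (blocks 1-indexed). -/
def posEndIdx (a : ℕ → ℝ) (i : ℕ) : ℕ :=
  Nat.nth (fun n => 0 < a n ∧ a (n + 1) ≤ 0) (i - 1)

/-- The first element `n_i` of the `i`-th negative block `N_i` (blocks 1-indexed). -/
def negStartIdx (a : ℕ → ℝ) (i : ℕ) : ℕ :=
  Nat.nth (fun n => a n ≤ 0 ∧ (n = 0 ∨ 0 < a (n - 1))) (i - 1)

/-- The last element `m_i` of the `i`-th negative block `N_i` (blocks 1-indexed). -/
def negEndIdx (a : ℕ → ℝ) (i : ℕ) : ℕ :=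
  Nat.nth (fun n => a n ≤ 0 ∧ 0 < a (n + 1)) (i - 1)

/-- `S_{[P_i, P_j]}`: the sum of the terms of `∑ a n` lying in the positive blocks
`P_i ∪ ⋯ ∪ P_j` (interpreted as `0` when `j < i`). -/
def SP (a : ℕ → ℝ) (i j : ℕ) : ℝ :=
  if j < i then 0
  else ∑ n ∈ Finset.Icc (posStartIdx a i) (posEndIdx a j), if 0 < a n then a n else 0

/-- `S_{[N_i, N_j]}`: the sum of the terms of `∑ a n` lying in the negative blocks
`N_i ∪ ⋯ ∪ N_j` (interpreted as `0` when `j < i`). -/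
def SN (a : ℕ → ℝ) (i j : ℕ) : ℝ :=
  if j < i then 0
  else ∑ n ∈ Finset.Icc (negStartIdx a i) (negEndIdx a j), if a n ≤ 0 then a n else 0

/-- The substantial property on positive blocks. -/
def STP (a : ℕ → ℝ) : Prop :=
  ∃ k : ℕ, ∃ ε : ℝ, 0 < ε ∧ ∃ i0 : ℕ, ∀ i > i0, SP a i (i + k) ≥ ε

/-- The substantial property on negative blocks. -/
def STN (a : ℕ → ℝ) : Prop :=
  ∃ k : ℕ, ∃ ε : ℝ, 0 < ε ∧ ∃ i0 : ℕ, ∀ i > i0, SN a i (i + k) ≤ -ε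
/-- Length of the `k`-th block of the example series: `2k` if `k` is a perfect
square, otherwise `2`. -/
def exBlockLen (k : ℕ) : ℕ := if Nat.sqrt k * Nat.sqrt k = k then 2 * k else 2

/-- Starting index (in the example series) of the `k`-th block (`k ≥ 1`). -/
def exBlockStart (k : ℕ) : ℕ := ∑ j ∈ Finset.Ico 1 k, exBlockLen j

/-- The index `k ≥ 1` of the block containing position `n` of the example series. -/
def exBlockIdx (n : ℕ) : ℕ := Nat.findGreatest (fun k => exBlockStart k ≤ n) (n + 1)

/-- The example series: the concatenation, for `k = 1, 2, 3, …`, of the blocks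
`B_k`, where `B_k` consists of `k` copies of `1/k` followed by `k` copies of
`-1/k` if `k` is a perfect square, and `B_k = (1/k, -1/k)` otherwise. -/
def exA (n : ℕ) : ℝ :=
  let k := exBlockIdx n
  let o := n - exBlockStart k
  if Nat.sqrt k * Nat.sqrt k = k then
    (if o < k then (1 : ℝ) / (k : ℝ) else -((1 : ℝ) / (k : ℝ)))
  else (if o = 0 then (1 : ℝ) / (k : ℝ) else -((1 : ℝ) / (k : ℝ)))

/-- The example series diverges: its sequence of partial sums does
not converge. -/

lemma exLen_two_le {k : ℕ} (hk : 1 ≤ k) : 2 ≤ exBlockLen k := by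
  unfold exBlockLen
  split
  · omega
  · omega

lemma exStart_succ (k : ℕ) : exBlockStart (k + 1) = exBlockStart k + exBlockLen k := by
  rcases Nat.eq_zero_or_pos k with rfl | hk
  · simp [exBlockStart, exBlockLen]
  · unfold exBlockStart
    rw [Finset.sum_Ico_succ_top hk]

lemma exStart_mono : Monotone exBlockStart := by
  intro a b hab
  exact Finset.sum_le_sum_of_subset (Finset.Ico_subset_Ico le_rfl hab)

lemma le_exStart_succ (k : ℕ) : k ≤ exBlockStart (k + 1) := by
  induction k with
  | zero => simp
  | succ n ih =>
    rw [exStart_succ]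
    have := exLen_two_le (k := n + 1) (by omega)
    omega

lemma exIdx_eq {k n : ℕ} (hk : 1 ≤ k) (h1 : exBlockStart k ≤ n)
    (h2 : n < exBlockStart (k + 1)) : exBlockIdx n = k := by
  unfold exBlockIdx
  rw [Nat.findGreatest_eq_iff]
  refine ⟨?_, fun _ => h1, fun m hm _ hsm => ?_⟩
  · have := le_exStart_succ (k - 1)
    have hkk : k - 1 + 1 = k := by omega
    rw [hkk] at this
    omega
  · have : exBlockStart (k + 1) ≤ exBlockStart m := exStart_mono (by omega)
    omega

lemma exA_eval {k n : ℕ} (hk : 1 ≤ k) (h1 : exBlockStart k ≤ n)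
    (h2 : n < exBlockStart (k + 1)) :
    exA n = if Nat.sqrt k * Nat.sqrt k = k then
      (if n - exBlockStart k < k then (1 : ℝ) / (k : ℝ) else -((1 : ℝ) / (k : ℝ)))
    else (if n - exBlockStart k = 0 then (1 : ℝ) / (k : ℝ) else -((1 : ℝ) / (k : ℝ))) := by
  unfold exA
  rw [exIdx_eq hk h1 h2]

lemma exHalf_sum {k : ℕ} (hk : 1 ≤ k) (hsq : Nat.sqrt k * Nat.sqrt k = k) :
    ∑ n ∈ Finset.Ico (exBlockStart k) (exBlockStart k + k), exA n = 1 := by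
  have hlen : exBlockLen k = 2 * k := by unfold exBlockLen; rw [if_pos hsq]
  have hst : exBlockStart (k + 1) = exBlockStart k + 2 * k := by
    rw [exStart_succ, hlen]
  have h1 : ∀ n ∈ Finset.Ico (exBlockStart k) (exBlockStart k + k),
      exA n = (1 : ℝ) / (k : ℝ) := by
    intro n hn
    rw [Finset.mem_Ico] at hn
    rw [exA_eval hk hn.1 (by omega), if_pos hsq, if_pos (by omega)]
  rw [Finset.sum_congr rfl h1, Finset.sum_const, Nat.card_Ico]
  have : (k : ℝ) ≠ 0 := Nat.cast_ne_zero.mpr (by omega)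
  rw [Nat.add_sub_cancel_left, nsmul_eq_mul]
  field_simp

lemma exBlock_sum {k : ℕ} (hk : 1 ≤ k) :
    ∑ n ∈ Finset.Ico (exBlockStart k) (exBlockStart (k + 1)), exA n = 0 := by
  have hkR : (k : ℝ) ≠ 0 := Nat.cast_ne_zero.mpr (by omega)
  by_cases hsq : Nat.sqrt k * Nat.sqrt k = k
  · have hlen : exBlockLen k = 2 * k := by unfold exBlockLen; rw [if_pos hsq]
    have hst : exBlockStart (k + 1) = exBlockStart k + 2 * k := by
      rw [exStart_succ, hlen]
    rw [hst, show exBlockStart k + 2 * k = (exBlockStart k + k) + k by ring,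
      ← Finset.sum_Ico_consecutive exA (by omega) (by omega : exBlockStart k + k ≤ exBlockStart k + k + k)]
    rw [exHalf_sum hk hsq]
    have h2 : ∀ n ∈ Finset.Ico (exBlockStart k + k) (exBlockStart k + k + k),
        exA n = -((1 : ℝ) / (k : ℝ)) := by
      intro n hn
      rw [Finset.mem_Ico] at hn
      rw [exA_eval hk (by omega) (by omega), if_pos hsq, if_neg (by omega)]
    rw [Finset.sum_congr rfl h2, Finset.sum_const, Nat.card_Ico]
    rw [Nat.add_sub_cancel_left, nsmul_eq_mul]
    field_simp
    norm_num
  · have hlen : exBlockLen k = 2 := by unfold exBlockLen; rw [if_neg hsq]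
    have hst : exBlockStart (k + 1) = exBlockStart k + 2 := by
      rw [exStart_succ, hlen]
    rw [hst, Finset.sum_Ico_eq_sum_range]
    simp only [show exBlockStart k + 2 - exBlockStart k = 2 from by omega]
    rw [Finset.sum_range_succ, Finset.sum_range_one]
    rw [exA_eval hk (by omega) (by omega), exA_eval hk (by omega) (by omega),
      if_neg hsq, if_neg hsq, if_pos (by omega), if_neg (by omega)]
    ring

lemma exPartial_start (k : ℕ) : partialSum exA (exBlockStart (k + 1)) = 0 := by
  induction k with
  | zero => simp [partialSum, exBlockStart]
  | succ n ih =>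
    unfold partialSum at *
    rw [Finset.range_eq_Ico] at *
    have hle : exBlockStart (n + 1) ≤ exBlockStart (n + 2) := exStart_mono (by omega)
    rw [← Finset.sum_Ico_consecutive exA (Nat.zero_le _) hle, ih,
      exBlock_sum (by omega : 1 ≤ n + 1)]
    ring

lemma exPartial_one {k : ℕ} (hk : 1 ≤ k) (hsq : Nat.sqrt k * Nat.sqrt k = k) :
    partialSum exA (exBlockStart k + k) = 1 := by
  obtain ⟨m, rfl⟩ : ∃ m, k = m + 1 := ⟨k - 1, by omega⟩
  unfold partialSum
  rw [Finset.range_eq_Ico,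
    ← Finset.sum_Ico_consecutive exA (Nat.zero_le _) (by omega : exBlockStart (m+1) ≤ exBlockStart (m+1) + (m+1))]
  have := exPartial_start m
  unfold partialSum at this
  rw [Finset.range_eq_Ico] at this
  rw [this, exHalf_sum hk hsq]
  ring

theorem statement12 : ¬ Converges exA := by
  rintro ⟨L, hL⟩
  have h0 : Tendsto (fun j : ℕ => partialSum exA (exBlockStart (j + 1))) atTop (nhds L) := by
    refine hL.comp ?_
    exact tendsto_atTop_mono le_exStart_succ tendsto_id
  have h0' : (fun j : ℕ => partialSum exA (exBlockStart (j + 1))) = fun _ => (0 : ℝ) := by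
    funext j; exact exPartial_start j
  rw [h0'] at h0
  have hL0 : L = 0 := tendsto_nhds_unique h0 tendsto_const_nhds
  have h1 : Tendsto (fun j : ℕ => partialSum exA (exBlockStart ((j+1)*(j+1)) + (j+1)*(j+1)))
      atTop (nhds L) := by
    refine hL.comp ?_
    refine tendsto_atTop_mono (fun j => ?_) tendsto_id
    have : j + 1 ≤ (j+1)*(j+1) := Nat.le_mul_of_pos_left _ (by omega)
    simp only [id]
    omega
  have h1' : (fun j : ℕ => partialSum exA (exBlockStart ((j+1)*(j+1)) + (j+1)*(j+1)))
      = fun _ => (1 : ℝ) := by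
    funext j
    exact exPartial_one (Nat.mul_pos j.succ_pos j.succ_pos) (by rw [Nat.sqrt_eq (j+1)])
  rw [h1'] at h1
  have hL1 : L = 1 := tendsto_nhds_unique h1 tendsto_const_nhds
  norm_num [hL0] at hL1
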